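/- Suppose block 1 consists of a single index r₁, i.e. #{r : b r = 1} = 1 with b r₁ = 1. For an index u with b u = 2, let E_u ∈ N^{12} denote the matrix with entry 1 in position (r₁, u) and 0 elsewhere. Then for every derivation f of N, all indices u, v with b u = b v = 2, and every index s with b s = t, one has f(E_u) v s = f(E_v) u s. -/

import Mathlib

/-- `A` is a strictly block upper triangular matrix relative to the block function `b`
(index `r` lies in block `b r`): `A r s = 0` whenever `b r ≥ b s`. -/
def InN {F : Type*} [Field F] {n : ℕ} (b : Fin n → ℕ)
    (A : Matrix (Fin n) (Fin n) F) : Prop :=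
  ∀ r s, b s ≤ b r → A r s = 0

/-- `A` lies in the `(i,j)` block `N^{ij}`: `A r s = 0` unless `b r = i` and `b s = j`. -/
def InBlk {F : Type*} [Field F] {n : ℕ} (b : Fin n → ℕ) (i j : ℕ)
    (A : Matrix (Fin n) (Fin n) F) : Prop :=
  ∀ r s, ¬(b r = i ∧ b s = j) → A r s = 0

/-- `f` is a derivation of the Lie algebra `N` of strictly block upper triangular matrices:
it maps `N` into `N` and satisfies `f [X,Y] = [f X, Y] + [X, f Y]` on `N`,
where `[X,Y] = XY - YX`. -/
def IsDerN {F : Type*} [Field F] {n : ℕ} (b : Fin n → ℕ)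
    (f : Matrix (Fin n) (Fin n) F →ₗ[F] Matrix (Fin n) (Fin n) F) : Prop :=
  (∀ A, InN b A → InN b (f A)) ∧
  ∀ X Y, InN b X → InN b Y →
    f (X * Y - Y * X) = (f X * Y - Y * f X) + (X * f Y - f Y * X)

/-- if block 1 is a single index `r₁`, then for every derivation `f` of `N`,
the `i`-th row of `f(E^{12}_{1j})_{2t}` equals the `j`-th row of `f(E^{12}_{1i})_{2t}`:
`f(E_u) v s = f(E_v) u s` for `b u = b v = 2`, `b s = t`. -/
theorem stmt8 {F : Type*} [Field F] {n t : ℕ} (b : Fin n → ℕ)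
    (hn : 1 ≤ n) (ht : 3 ≤ t) (hmono : Monotone b)
    (hlb : ∀ r, 1 ≤ b r) (hub : ∀ r, b r ≤ t)
    (hsurj : ∀ k, 1 ≤ k → k ≤ t → ∃ r, b r = k)
    (r₁ : Fin n) (hr₁ : b r₁ = 1)
    (hcard : (Finset.univ.filter fun r => b r = 1).card = 1)
    (f : Matrix (Fin n) (Fin n) F →ₗ[F] Matrix (Fin n) (Fin n) F)
    (hf : IsDerN b f) :
    ∀ u v, b u = 2 → b v = 2 → ∀ s, b s = t →
      f (Matrix.single r₁ u (1 : F)) v s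
        = f (Matrix.single r₁ v (1 : F)) u s := by
  intro u v hu hv s hs
  set X := Matrix.single r₁ u (1 : F) with hX
  set Y := Matrix.single r₁ v (1 : F) with hY
  have hur : u ≠ r₁ := fun h => by rw [h, hr₁] at hu; omega
  have hvr : v ≠ r₁ := fun h => by rw [h, hr₁] at hv; omega
  have hsu : s ≠ u := fun h => by rw [h, hu] at hs; omega
  have hsv : s ≠ v := fun h => by rw [h, hv] at hs; omega
  have hXN : InN b X := by
    intro r c hrc
    apply Matrix.single_apply_of_ne
    rintro ⟨rfl, rfl⟩
    rw [hr₁, hu] at hrc; omega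
  have hYN : InN b Y := by
    intro r c hrc
    apply Matrix.single_apply_of_ne
    rintro ⟨rfl, rfl⟩
    rw [hr₁, hv] at hrc; omega
  have hXY : X * Y = 0 := Matrix.single_mul_single_of_ne _ _ _ _ hur _
  have hYX : Y * X = 0 := Matrix.single_mul_single_of_ne _ _ _ _ hvr _
  have hd := hf.2 X Y hXN hYN
  rw [hXY, hYX, sub_zero, map_zero] at hd
  have hE := congrFun (congrFun hd r₁) s
  simp only [Matrix.add_apply, Matrix.sub_apply, Matrix.zero_apply] at hE
  rw [hY] at hE
  rw [Matrix.mul_single_apply_of_ne (1:F) r₁ v r₁ s hsv] at hE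
  rw [Matrix.single_mul_apply_same] at hE
  rw [← hY, hX] at hE
  rw [Matrix.single_mul_apply_same] at hE
  rw [Matrix.mul_single_apply_of_ne (1:F) r₁ u r₁ s hsu] at hE
  rw [← hX] at hE
  simp only [one_mul, zero_sub, sub_zero] at hE
  linear_combination hE
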